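/- arXiv:0712.2756 — 6 statements merged into one kernel-verified Lean document; each statement's English description precedes it below -/
import Mathlib

section
/- Let n ≥ 4 be an integer and let R ⊆ Fin n be a set of marked indices with |R| ≤ 1. Then every admissible coefficient system a : Finset (Fin n) → ℝ for the pair (n, R) satisfies a(S) ≥ 0 for every subset S of Fin n. (This is the combinatorial form of the paper's Theorem: for m ∈ {n, n−1}, every S_m-invariant F-nef divisor on the moduli space of stable n-pointed genus zero curves, written in the boundary basis, has all coefficients nonnegative, hence is an effective combination of boundary divisors.) -/
open Finset

/-- An admissible coefficient system for the pair `(n, R)`: the combinatorial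
data of an `S_m`-invariant F-nef divisor on `\bar M_{0,n}` written in boundary
classes, where `R` is the set of marked (non-permuted) indices. -/
def Admissible (n : ℕ) (R : Finset (Fin n)) (a : Finset (Fin n) → ℝ) : Prop :=
  (∀ S : Finset (Fin n), S.card ≤ 1 → a S = 0) ∧
  (∀ S : Finset (Fin n), a S = a Sᶜ) ∧
  (∀ S T : Finset (Fin n), S.card = T.card → S ∩ R = T ∩ R → a S = a T) ∧
  (∀ I J K L : Finset (Fin n),
    I.Nonempty → J.Nonempty → K.Nonempty → L.Nonempty →
    Disjoint I J → Disjoint I K → Disjoint I L →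
    Disjoint J K → Disjoint J L → Disjoint K L →
    I ∪ J ∪ K ∪ L = Finset.univ →
    a I + a J + a K + a L ≤ a (I ∪ J) + a (I ∪ K) + a (I ∪ L))

/-- Canonical set of size `i` (for `i < n`): preimage under `τ` of `{x : x < i}`. -/
def Cset (n : ℕ) (τ : Equiv.Perm (Fin n)) (i : ℕ) : Finset (Fin n) :=
  Finset.univ.filter (fun x => ((τ x : Fin n) : ℕ) < i)

lemma Cset_card (n : ℕ) (τ : Equiv.Perm (Fin n)) (i : ℕ) (hi : i < n) :
    (Cset n τ i).card = i := by
  have h1 : Cset n τ i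
      = (Finset.univ.filter (fun y : Fin n => (y : ℕ) < i)).map τ.symm.toEmbedding := by
    ext x
    simp only [Cset, Finset.mem_filter, Finset.mem_univ, true_and, Finset.mem_map,
      Equiv.toEmbedding_apply]
    constructor
    · intro hx; exact ⟨τ x, hx, Equiv.symm_apply_apply τ x⟩
    · rintro ⟨y, hy, rfl⟩; simpa using hy
  have h2 : (Finset.univ.filter (fun y : Fin n => (y : ℕ) < i)) = Finset.Iio (⟨i, hi⟩ : Fin n) := by
    ext y
    simp [Finset.mem_Iio, Fin.lt_def]
  rw [h1, Finset.card_map, h2, Fin.card_Iio]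

lemma Cset_mono (n : ℕ) (τ : Equiv.Perm (Fin n)) {i j : ℕ} (hij : i ≤ j) :
    Cset n τ i ⊆ Cset n τ j := by
  intro x hx
  simp only [Cset, Finset.mem_filter, Finset.mem_univ, true_and] at hx ⊢
  omega

/-- The pairing bound: `(M+2) · Δ(M+1) ≤ 2 · S(M+1)` for a subadditive `Δ`. -/
lemma lem_pairing (Δ : ℕ → ℝ) (M : ℕ)
    (hsub : ∀ j k, 1 ≤ j → 1 ≤ k → j + k ≤ M + 1 → Δ (j + k) ≤ Δ j + Δ k) :
    ((M : ℝ) + 2) * Δ (M + 1) ≤ 2 * ∑ i ∈ Finset.range (M + 1), Δ (i + 1) := by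
  have key : ∀ i ∈ Finset.range M, Δ (M + 1) ≤ Δ (i + 1) + Δ (M - i) := by
    intro i hi
    simp only [Finset.mem_range] at hi
    have h1 : (i + 1) + (M - i) = M + 1 := by omega
    have h2 := hsub (i + 1) (M - i) (by omega) (by omega) (by omega)
    rwa [h1] at h2
  have hsum := Finset.sum_le_sum key
  rw [Finset.sum_const, Finset.sum_add_distrib] at hsum
  have hrefl : ∑ i ∈ Finset.range M, Δ (M - i) = ∑ i ∈ Finset.range M, Δ (i + 1) := by
    rw [← Finset.sum_range_reflect (fun i => Δ (i + 1)) M]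
    apply Finset.sum_congr rfl
    intro i hi
    simp only [Finset.mem_range] at hi
    congr 1
    omega
  rw [hrefl, nsmul_eq_mul] at hsum
  simp only [Finset.card_range] at hsum
  rw [Finset.sum_range_succ]
  linarith

/-- Key lemma : for subadditive `Δ` on `[1,M]`, `m(m+1)·S_M ≤ M(M+1)·S_m`. -/
lemma lem_key (Δ : ℕ → ℝ) :
    ∀ M : ℕ, (∀ j k, 1 ≤ j → 1 ≤ k → j + k ≤ M → Δ (j + k) ≤ Δ j + Δ k) →
      ∀ m, m ≤ M →
      ((m : ℝ) * ((m : ℝ) + 1)) * ∑ i ∈ Finset.range M, Δ (i + 1)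
        ≤ ((M : ℝ) * ((M : ℝ) + 1)) * ∑ i ∈ Finset.range m, Δ (i + 1) := by
  intro M
  induction M with
  | zero =>
    intro _ m hm
    have : m = 0 := by omega
    subst this; simp
  | succ M ih =>
    intro hsub m hm
    rcases Nat.eq_or_lt_of_le hm with h | h
    · subst h; exact le_rfl
    · have hmM : m ≤ M := by omega
      by_cases hm0 : m = 0
      · subst hm0; simp
      · have hm1 : 1 ≤ m := by omega
        have hM1 : 1 ≤ M := by omega
        have ih' := ih (fun j k hj hk hjk => hsub j k hj hk (by omega)) m hmM
        have h1 := lem_pairing Δ M hsub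
        rw [Finset.sum_range_succ] at h1 ⊢
        set SM := ∑ i ∈ Finset.range M, Δ (i + 1) with hSM
        set Sm := ∑ i ∈ Finset.range m, Δ (i + 1) with hSm
        have hMx : (M : ℝ) * Δ (M + 1) ≤ 2 * SM := by linarith
        have hmn : (0 : ℝ) ≤ (m : ℝ) * ((m : ℝ) + 1) := by positivity
        have P1 := mul_le_mul_of_nonneg_left hMx hmn
        have hM2 : (0 : ℝ) ≤ (M : ℝ) + 2 := by positivity
        have P2 := mul_le_mul_of_nonneg_left ih' hM2
        have hMpos : (0 : ℝ) < (M : ℝ) := by exact_mod_cast hM1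
        have step : (M : ℝ) * (((m : ℝ) * ((m : ℝ) + 1)) * (SM + Δ (M + 1)))
            ≤ (M : ℝ) * ((((M : ℕ) + 1 : ℝ) * (((M : ℕ) + 1 : ℝ) + 1)) * Sm) := by
          nlinarith [P1, P2]
        have := le_of_mul_le_mul_left step hMpos
        push_cast at this ⊢
        linarith

/-- If `|R| ≤ 1` (the cases `m = n` and `m = n-1` of the paper's Theorem),
every admissible coefficient system for `(n, R)` with `n ≥ 4` has all
coefficients nonnegative. -/
theorem stmt_0 (n : ℕ) (hn : 4 ≤ n) (R : Finset (Fin n)) (hR : R.card ≤ 1)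
    (a : Finset (Fin n) → ℝ) (ha : Admissible n R a) :
    ∀ S : Finset (Fin n), 0 ≤ a S := by
  obtain ⟨h01, hcompl, hinv, hF⟩ := ha
  haveI : Nonempty (Fin n) := ⟨⟨0, by omega⟩⟩
  obtain ⟨r, hRr⟩ : ∃ r : Fin n, R ⊆ {r} :=
    Finset.card_le_one_iff_subset_singleton.mp hR
  set lastI : Fin n := ⟨n - 1, by omega⟩ with hlastI
  set τ : Equiv.Perm (Fin n) := Equiv.swap r lastI with hτ
  set C : ℕ → Finset (Fin n) := fun i => Cset n τ i with hCdef
  set f : ℕ → ℝ := fun i => a (C i) with hfdef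
  -- r is not in C i for i ≤ n-1
  have hCr : ∀ i : ℕ, i ≤ n - 1 → r ∉ C i := by
    intro i hi hmem
    simp only [hCdef, Cset, Finset.mem_filter, Finset.mem_univ, true_and] at hmem
    rw [show τ r = lastI from Equiv.swap_apply_left r lastI] at hmem
    simp only [hlastI] at hmem
    omega
  -- empty intersection with R for sets avoiding r
  have hRint : ∀ T : Finset (Fin n), r ∉ T → T ∩ R = ∅ := by
    intro T hT
    apply Finset.eq_empty_of_forall_notMem
    intro x hx
    rw [Finset.mem_inter] at hx
    have := hRr hx.2
    rw [Finset.mem_singleton] at this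
    exact hT (this ▸ hx.1)
  -- card bound for sets avoiding r
  have hcardle : ∀ S : Finset (Fin n), r ∉ S → S.card ≤ n - 1 := by
    intro S hS
    have hsub : S ⊆ Finset.univ.erase r := by
      intro x hx
      exact Finset.mem_erase.mpr ⟨fun h => hS (h ▸ hx), Finset.mem_univ x⟩
    have := Finset.card_le_card hsub
    rwa [Finset.card_erase_of_mem (Finset.mem_univ r), Finset.card_univ,
      Fintype.card_fin] at this
  -- the value of a on any set avoiding r
  have hval : ∀ S : Finset (Fin n), r ∉ S → a S = f S.card := by
    intro S hS
    have hcard : S.card < n := by have := hcardle S hS; omega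
    apply hinv
    · exact (Cset_card n τ S.card hcard).symm
    · rw [hRint S hS, hRint (C S.card) (hCr S.card (by omega))]
  -- basic values of f
  have hf0 : f 0 = 0 := by
    apply h01
    rw [hCdef]
    rw [Cset_card n τ 0 (by omega)]
    omega
  have hf1 : f 1 = 0 := by
    apply h01
    rw [hCdef]
    rw [Cset_card n τ 1 (by omega)]
  have hftop : f (n - 1) = 0 := by
    show a (C (n - 1)) = 0
    rw [hcompl (C (n - 1))]
    apply h01
    rw [Finset.card_compl, Fintype.card_fin, hCdef, Cset_card n τ (n - 1) (by omega)]
    omega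
  -- the F-inequality in terms of f
  have hD : ∀ p q : ℕ, 1 ≤ p → 1 ≤ q → p + q ≤ n - 2 →
      f p + f q + f (p + q + 1) ≤ f (p + 1) + f (q + 1) + f (p + q) := by
    intro p q hp hq hpq
    have hpq1 : p + q + 1 ≤ n - 1 := by omega
    have hpq1n : p + q + 1 < n := by omega
    have hpqn : p + q < n := by omega
    have hpn : p < n := by omega
    have hqn : q < n := by omega
    set I : Finset (Fin n) := C (p + q + 1) \ C (p + q) with hI
    set J : Finset (Fin n) := C p with hJ
    set K : Finset (Fin n) := C (p + q) \ C p with hK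
    set L : Finset (Fin n) := (C (p + q + 1))ᶜ with hL
    have hsub1 : C (p + q) ⊆ C (p + q + 1) := Cset_mono n τ (by omega)
    have hsub2 : C p ⊆ C (p + q) := Cset_mono n τ (by omega)
    have hIcard : I.card = 1 := by
      rw [hI, Finset.card_sdiff_of_subset hsub1, Cset_card n τ _ hpq1n, Cset_card n τ _ hpqn]
      omega
    have hJcard : J.card = p := Cset_card n τ _ hpn
    have hKcard : K.card = q := by
      rw [hK, Finset.card_sdiff_of_subset hsub2, Cset_card n τ _ hpqn, Cset_card n τ _ hpn]
      omega
    have hLcard : L.card = n - (p + q + 1) := by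
      rw [hL, Finset.card_compl, Fintype.card_fin, Cset_card n τ _ hpq1n]
    -- disjointness
    have hIJ : Disjoint I J := Finset.sdiff_disjoint.mono_right hsub2
    have hIK : Disjoint I K := Finset.sdiff_disjoint.mono_right Finset.sdiff_subset
    have hJK : Disjoint J K := Finset.disjoint_sdiff
    have hIL : Disjoint I L := by
      rw [hL]
      exact disjoint_compl_right.mono_left Finset.sdiff_subset
    have hJL : Disjoint J L := by
      rw [hL]
      exact disjoint_compl_right.mono_left (hsub2.trans hsub1)
    have hKL : Disjoint K L := by
      rw [hL]
      exact disjoint_compl_right.mono_left (Finset.sdiff_subset.trans hsub1)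
    -- union
    have hJKU : J ∪ K = C (p + q) := Finset.union_sdiff_of_subset hsub2
    have hIJKU : I ∪ J ∪ K = C (p + q + 1) := by
      rw [Finset.union_assoc, hJKU, hI, Finset.sdiff_union_of_subset hsub1]
    have hunion : I ∪ J ∪ K ∪ L = Finset.univ := by
      rw [hIJKU, hL, Finset.union_compl]
    -- the F-inequality
    have hFin := hF I J K L
      (Finset.card_pos.mp (by omega)) (Finset.card_pos.mp (by omega))
      (Finset.card_pos.mp (by omega)) (Finset.card_pos.mp (by omega))
      hIJ hIK hIL hJK hJL hKL hunion
    -- identify the values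
    have haI : a I = 0 := h01 I (by omega)
    have haJ : a J = f p := by rw [hJ, hfdef]
    have haK : a K = f q := by
      rw [hval K (fun hm => hCr (p + q) (by omega) (Finset.sdiff_subset hm)), hKcard]
    have haL : a L = f (p + q + 1) := by
      rw [hcompl L, hL, compl_compl, hfdef]
    have haIJ : a (I ∪ J) = f (p + 1) := by
      have hrn : r ∉ I ∪ J := by
        intro hm
        rcases Finset.mem_union.mp hm with hm | hm
        · exact hCr (p + q + 1) hpq1 (Finset.sdiff_subset hm)
        · exact hCr p (by omega) hm
      rw [hval _ hrn, Finset.card_union_of_disjoint hIJ, hIcard, hJcard, Nat.add_comm]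
    have haIK : a (I ∪ K) = f (q + 1) := by
      have hrn : r ∉ I ∪ K := by
        intro hm
        rcases Finset.mem_union.mp hm with hm | hm
        · exact hCr (p + q + 1) hpq1 (Finset.sdiff_subset hm)
        · exact hCr (p + q) (by omega) (Finset.sdiff_subset hm)
      rw [hval _ hrn, Finset.card_union_of_disjoint hIK, hIcard, hKcard, Nat.add_comm]
    have haIL : a (I ∪ L) = f (p + q) := by
      have hILU : I ∪ L = (C (p + q))ᶜ := by
        ext x
        simp only [hI, hL, Finset.mem_union, Finset.mem_sdiff, Finset.mem_compl]
        have h1 : x ∈ C (p + q) → x ∈ C (p + q + 1) := fun hx => hsub1 hx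
        tauto
      rw [hILU, ← hcompl (C (p + q)), hfdef]
    rw [haI, haJ, haK, haL, haIJ, haIK, haIL] at hFin
    linarith
  -- subadditivity of the increments
  set Δ : ℕ → ℝ := fun j => f (j + 1) - f j with hΔdef
  have hsubadd : ∀ j k, 1 ≤ j → 1 ≤ k → j + k ≤ n - 2 → Δ (j + k) ≤ Δ j + Δ k := by
    intro j k hj hk hjk
    have := hD j k hj hk hjk
    simp only [hΔdef]
    have e : j + k + 1 = j + (k + 1) := by omega
    linarith
  -- telescoping
  have htel : ∀ m : ℕ, ∑ i ∈ Finset.range m, Δ (i + 1) = f (m + 1) - f 1 := by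
    intro m
    have := Finset.sum_range_sub (fun i => f (i + 1)) m
    simp only [hΔdef]
    convert this using 1
  -- nonnegativity of f
  have hfpos : ∀ i : ℕ, i ≤ n - 1 → 0 ≤ f i := by
    intro i hi
    rcases Nat.eq_zero_or_pos i with h | h
    · subst h; rw [hf0]
    · obtain ⟨m, rfl⟩ : ∃ m, i = m + 1 := ⟨i - 1, by omega⟩
      have hm : m ≤ n - 2 := by omega
      have hkey := lem_key Δ (n - 2) hsubadd m hm
      rw [htel, htel] at hkey
      have htop : f (n - 2 + 1) = 0 := by
        rw [show n - 2 + 1 = n - 1 from by omega, hftop]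
      rw [htop, hf1] at hkey
      have hc2 : (2 : ℝ) ≤ ((n - 2 : ℕ) : ℝ) := by
        have : (2 : ℕ) ≤ n - 2 := by omega
        exact_mod_cast this
      have hcpos : (0 : ℝ) < ((n - 2 : ℕ) : ℝ) * (((n - 2 : ℕ) : ℝ) + 1) := by nlinarith
      by_contra hneg
      push_neg at hneg
      nlinarith [hkey, mul_pos hcpos (show (0 : ℝ) < -(f (m + 1)) by linarith)]
  -- conclusion
  intro S
  by_cases hr : r ∈ S
  · rw [hcompl S]
    have hrn : r ∉ Sᶜ := by simp [hr]
    rw [hval _ hrn]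
    exact hfpos _ (hcardle _ hrn)
  · rw [hval S hr]
    exact hfpos _ (hcardle S hr)
end

section
/- Let n ≥ 4 be an integer and let R = {p₁, p₂, p₃} ⊆ Fin n with |R| = 3. Then every admissible coefficient system a : Finset (Fin n) → ℝ for (n, R) that additionally satisfies the normalizations a({p₁,p₂}) = 0, a({p₁,p₃}) = 0 and a({p₁,p₂,p₃}) = 0 (corresponding to writing the divisor in Rulla's basis ℬ_{n,n−3} of S_{n−3}-invariant boundary classes) satisfies a(S) ≥ 0 for every subset S of Fin n. (This is the combinatorial form of the paper's Theorem for m = n−3.) -/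
open Finset

/-- Hockey-stick/Vandermonde hybrid: `∑_{s=0}^{N} C(s,x) C(N-s,y) = C(N+1, x+y+1)`. -/
lemma hs_sum : ∀ (N : ℕ), ∀ (x y : ℕ),
    ∑ s ∈ range (N+1), Nat.choose s x * Nat.choose (N - s) y
      = Nat.choose (N+1) (x+y+1) := by
  intro N
  induction N with
  | zero =>
    intro x y
    cases x <;> cases y <;> simp [Nat.choose]
  | succ N ih =>
    intro x y
    rw [Finset.sum_range_succ]
    cases y with
    | zero =>
      have h : ∀ s ∈ range (N+1), Nat.choose s x * Nat.choose (N+1-s) 0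
          = Nat.choose s x * Nat.choose (N-s) 0 := by
        intro s _; simp
      rw [Finset.sum_congr rfl h, ih x 0]
      simp only [Nat.sub_self, Nat.choose_zero_right, mul_one]
      have := Nat.choose_succ_succ (N+1) x
      simp only [Nat.succ_eq_add_one, add_zero] at this ⊢
      omega
    | succ y' =>
      have h : ∀ s ∈ range (N+1), Nat.choose s x * Nat.choose (N+1-s) (y'+1)
          = Nat.choose s x * Nat.choose (N-s) y' + Nat.choose s x * Nat.choose (N-s) (y'+1) := by
        intro s hs
        rw [mem_range] at hs
        have h1 : N + 1 - s = (N - s) + 1 := by omega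
        rw [h1, Nat.choose_succ_succ, Nat.mul_add]
      rw [Finset.sum_congr rfl h, Finset.sum_add_distrib, ih x y', ih x (y'+1)]
      have h0 : Nat.choose (N+1-(N+1)) (y'+1) = 0 := by simp
      rw [h0, mul_zero, add_zero]
      have := Nat.choose_succ_succ (N+1) (x+y'+1)
      have e1 : x + (y'+1) + 1 = (x + y' + 1) + 1 := by omega
      rw [e1]
      simp only [Nat.succ_eq_add_one] at this
      omega

/-- A padded sum: reindexing `y ↦ x₀+y` and extending by zeros. -/
lemma padded_sum (N X B x₀ : ℕ) (hB : x₀ + B ≤ N + 1)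
    (hvanish : ∀ s, s < N + 1 → x₀ + B ≤ s → Nat.choose (N - s) X = 0) :
    ∑ y ∈ range B, Nat.choose (x₀ + y) x₀ * Nat.choose (N - (x₀ + y)) X
      = Nat.choose (N+1) (x₀ + X + 1) := by
  rw [← hs_sum N x₀ X]
  rw [show (∑ s ∈ range (N+1), Nat.choose s x₀ * Nat.choose (N - s) X)
      = ∑ s ∈ Ico x₀ (x₀ + B), Nat.choose s x₀ * Nat.choose (N - s) X from ?_]
  · rw [Finset.sum_Ico_eq_sum_range]
    have : x₀ + B - x₀ = B := by omega
    rw [this]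
  · symm
    apply Finset.sum_subset
    · intro s hs
      rw [mem_Ico] at hs; rw [mem_range]; omega
    · intro s hs hnot
      rw [mem_range] at hs
      rw [mem_Ico] at hnot
      push_neg at hnot
      by_cases hlt : s < x₀
      · rw [Nat.choose_eq_zero_of_lt hlt, zero_mul]
      · have : x₀ + B ≤ s := by omega
        rw [hvanish s hs this, mul_zero]

/-- Splitting a rectangular double sum along antidiagonals. -/
lemma diag_split (A B : ℕ) (F : ℕ → ℕ → ℝ) :
    ∑ x ∈ range A, ∑ y ∈ range B, F x y
      = ∑ s ∈ range (A+B), ∑ x ∈ range A,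
          (if x ≤ s ∧ s < x + B then F x (s - x) else 0) := by
  rw [Finset.sum_comm (s := range (A+B))]
  refine Finset.sum_congr rfl ?_
  intro x hx
  rw [mem_range] at hx
  have h1 : ∑ s ∈ range (A+B), (if x ≤ s ∧ s < x + B then F x (s - x) else 0)
      = ∑ s ∈ Ico x (x + B), F x (s - x) := by
    rw [← Finset.sum_filter]
    apply Finset.sum_congr
    · ext s
      simp only [mem_filter, mem_range, mem_Ico]
      omega
    · intro s hs; rfl
  rw [h1, Finset.sum_Ico_eq_sum_range]
  have : x + B - x = B := by omega
  rw [this]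
  apply Finset.sum_congr rfl
  intro y _
  have : x + y - x = y := by omega
  rw [this]

/-- The key combinatorial-analytic lemma: from the "rectangle" inequalities,
`m * g t ≥ t * g m`. -/
lemma lemA (m : ℕ) (f g : ℕ → ℝ) (hf1 : f 1 = 0) (hfm : f m = 0) (hg0 : g 0 = 0)
    (hI : ∀ a d : ℕ, 1 ≤ d → a + d + 1 ≤ m →
      g a + f d + g (a+d+1) ≤ g (a+1) + f (d+1) + g (a+d))
    (t : ℕ) (ht : t ≤ m) : (t : ℝ) * g m ≤ (m : ℝ) * g t := by
  rcases Nat.eq_zero_or_pos t with rfl | ht1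
  · simp [hg0]
  rcases eq_or_lt_of_le ht with rfl | htm
  · rfl
  -- now 1 ≤ t < m, so m ≥ 2
  have hm2 : 2 ≤ m := by omega
  set w : ℕ → ℕ → ℕ := fun x y => Nat.choose (x+y) x * Nat.choose (m-2-(x+y)) (t-1-x) with hw
  -- row sums
  have hrow : ∀ x, x < t → ∑ y ∈ range (m-t), w x y = (m-1).choose t := by
    intro x hx
    have h := padded_sum (m-2) (t-1-x) (m-t) x (by omega)
      (fun s hs hs2 => Nat.choose_eq_zero_of_lt (by omega))
    rw [show x + (t-1-x) + 1 = t from by omega, show m - 2 + 1 = m - 1 from by omega] at h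
    exact h
  -- column sums
  have hcol : ∀ y, y < m - t → ∑ x ∈ range t, w x y = (m-1).choose (t-1) := by
    intro y hy
    have hterm : ∀ x, x < t → w x y
        = Nat.choose (y+x) y * Nat.choose (m-2-(y+x)) (m-t-1-y) := by
      intro x hx
      rw [hw]
      simp only []
      congr 1
      · have h1 : x ≤ y + x := by omega
        have h2 := Nat.choose_symm h1
        rw [show y + x - x = y from by omega] at h2
        rw [show x + y = y + x from by omega, ← h2]
      · have h2 : t - 1 - x ≤ m - 2 - (x + y) := by omega
        have h3 := Nat.choose_symm h2
        rw [show m - 2 - (x+y) - (t-1-x) = m - t - 1 - y from by omega] at h3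
        rw [show m - 2 - (y+x) = m - 2 - (x+y) from by rw [Nat.add_comm x y], ← h3]
    have h := padded_sum (m-2) (m-t-1-y) t y (by omega)
      (fun s hs hs2 => Nat.choose_eq_zero_of_lt (by omega))
    rw [show y + (m-t-1-y) + 1 = m - t from by omega, show m - 2 + 1 = m - 1 from by omega] at h
    have e3 : (m-1).choose (m-t) = (m-1).choose (t-1) := by
      have h1 : m - t ≤ m - 1 := by omega
      have h2 := Nat.choose_symm h1
      rw [show m - 1 - (m-t) = t - 1 from by omega] at h2
      rw [← h2]
    rw [← e3, ← h]
    exact Finset.sum_congr rfl (fun x hx => hterm x (mem_range.mp hx))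
  -- diagonal sums
  have hdiag : ∀ s, s ≤ m - 2 →
      ∑ x ∈ range t, Nat.choose s x * Nat.choose (m-2-s) (t-1-x) = (m-2).choose (t-1) := by
    intro s hs
    have h := Nat.add_choose_eq s (m-2-s) (t-1)
    rw [show s + (m-2-s) = m - 2 from by omega] at h
    rw [Finset.Nat.sum_antidiagonal_eq_sum_range_succ_mk] at h
    rw [show (t - 1).succ = t from by omega] at h
    rw [h]
  -- nonnegativity of each weighted instance
  have key : 0 ≤ ∑ x ∈ range t, ∑ y ∈ range (m-t), (w x y : ℝ) *
      ((g (t-x) - g (t-1-x)) + (f (x+y+2) - f (x+y+1)) + (g (t+y) - g (t+y+1))) := by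
    apply Finset.sum_nonneg
    intro x hx
    apply Finset.sum_nonneg
    intro y hy
    rw [mem_range] at hx hy
    apply mul_nonneg (by positivity)
    have h := hI (t-1-x) (x+y+1) (by omega) (by omega)
    rw [show t-1-x+1 = t-x from by omega, show t-1-x+(x+y+1) = t+y from by omega,
        show x+y+1+1 = x+y+2 from by omega] at h
    linarith
  -- split into three double sums
  have hsplit : ∀ x ∈ range t, ∑ y ∈ range (m-t), (w x y : ℝ) *
      ((g (t-x) - g (t-1-x)) + (f (x+y+2) - f (x+y+1)) + (g (t+y) - g (t+y+1)))
      = (∑ y ∈ range (m-t), (w x y : ℝ) * (g (t-x) - g (t-1-x)))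
        + (∑ y ∈ range (m-t), (w x y : ℝ) * (f (x+y+2) - f (x+y+1)))
        + (∑ y ∈ range (m-t), (w x y : ℝ) * (g (t+y) - g (t+y+1))) := by
    intro x _
    rw [← Finset.sum_add_distrib, ← Finset.sum_add_distrib]
    exact Finset.sum_congr rfl (fun y _ => by ring)
  rw [Finset.sum_congr rfl hsplit, Finset.sum_add_distrib, Finset.sum_add_distrib] at key
  -- evaluate S1
  have hS1 : ∑ x ∈ range t, ∑ y ∈ range (m-t), (w x y:ℝ) * (g (t-x) - g (t-1-x))
      = ((m-1).choose t : ℝ) * g t := by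
    have h1 : ∀ x ∈ range t, ∑ y ∈ range (m-t), (w x y:ℝ) * (g (t-x) - g (t-1-x))
        = ((m-1).choose t : ℝ) * (g (t-x) - g (t-1-x)) := by
      intro x hx
      rw [← Finset.sum_mul, ← Nat.cast_sum, hrow x (mem_range.mp hx)]
    rw [Finset.sum_congr rfl h1, ← Finset.mul_sum]
    congr 1
    have h2 : ∀ x ∈ range t, g (t-x) - g (t-1-x) = g (t-x) - g (t-(x+1)) := by
      intro x _
      rw [show t-1-x = t-(x+1) from by omega]
    rw [Finset.sum_congr rfl h2, Finset.sum_range_sub' (fun i => g (t-i)) t]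
    simp [hg0]
  -- evaluate S3
  have hS3 : ∑ x ∈ range t, ∑ y ∈ range (m-t), (w x y:ℝ) * (g (t+y) - g (t+y+1))
      = ((m-1).choose (t-1) : ℝ) * (g t - g m) := by
    rw [Finset.sum_comm]
    have h1 : ∀ y ∈ range (m-t), ∑ x ∈ range t, (w x y:ℝ) * (g (t+y) - g (t+y+1))
        = ((m-1).choose (t-1):ℝ) * (g (t+y) - g (t+y+1)) := by
      intro y hy
      rw [← Finset.sum_mul, ← Nat.cast_sum, hcol y (mem_range.mp hy)]
    rw [Finset.sum_congr rfl h1, ← Finset.mul_sum]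
    congr 1
    have h2 : ∀ y ∈ range (m-t), g (t+y) - g (t+y+1) = g (t+y) - g (t+(y+1)) := by
      intro y _
      rw [show t+(y+1) = t+y+1 from by omega]
    rw [Finset.sum_congr rfl h2, Finset.sum_range_sub' (fun i => g (t+i)) (m-t)]
    rw [show t+0 = t from rfl, show t+(m-t) = m from by omega]
  -- evaluate S2 (diagonal telescope, vanishes)
  have hS2 : ∑ x ∈ range t, ∑ y ∈ range (m-t), (w x y:ℝ) * (f (x+y+2) - f (x+y+1)) = 0 := by
    rw [diag_split t (m-t) (fun x y => (w x y:ℝ) * (f (x+y+2) - f (x+y+1)))]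
    rw [show t + (m-t) = (m-1)+1 from by omega, Finset.sum_range_succ]
    have hlast : ∑ x ∈ range t,
        (if x ≤ m-1 ∧ m-1 < x + (m-t) then (w x (m-1-x):ℝ) * (f (x+(m-1-x)+2) - f (x+(m-1-x)+1)) else 0) = 0 := by
      apply Finset.sum_eq_zero
      intro x hx
      rw [mem_range] at hx
      rw [if_neg]
      intro hc
      omega
    have hmain : ∀ s ∈ range (m-1), (∑ x ∈ range t,
        (if x ≤ s ∧ s < x + (m-t) then (w x (s-x):ℝ) * (f (x+(s-x)+2) - f (x+(s-x)+1)) else 0))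
        = ((m-2).choose (t-1) : ℝ) * (f (s+2) - f (s+1)) := by
      intro s hs
      rw [mem_range] at hs
      have h1 : ∀ x ∈ range t,
          (if x ≤ s ∧ s < x + (m-t) then (w x (s-x):ℝ) * (f (x+(s-x)+2) - f (x+(s-x)+1)) else 0)
          = ((Nat.choose s x * Nat.choose (m-2-s) (t-1-x) : ℕ) : ℝ) * (f (s+2) - f (s+1)) := by
        intro x hx
        rw [mem_range] at hx
        by_cases hc : x ≤ s ∧ s < x + (m-t)
        · rw [if_pos hc]
          have e : x + (s - x) = s := by omega
          rw [e]
          congr 1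
          rw [Nat.cast_inj, hw]
          simp only []
          rw [e]
        · rw [if_neg hc]
          push_neg at hc
          by_cases hxs : x ≤ s
          · have h2 : x + (m-t) ≤ s := hc hxs
            have h3 : Nat.choose (m-2-s) (t-1-x) = 0 := by
              apply Nat.choose_eq_zero_of_lt
              omega
            rw [h3, Nat.mul_zero, Nat.cast_zero, zero_mul]
          · have h3 : Nat.choose s x = 0 := Nat.choose_eq_zero_of_lt (by omega)
            rw [h3, Nat.zero_mul, Nat.cast_zero, zero_mul]
      rw [Finset.sum_congr rfl h1, ← Finset.sum_mul, ← Nat.cast_sum, hdiag s (by omega)]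
    rw [Finset.sum_congr rfl hmain, hlast, add_zero, ← Finset.mul_sum]
    have h2 : ∑ s ∈ range (m-1), (f (s+2) - f (s+1)) = f m - f 1 := by
      have h3 := Finset.sum_range_sub (fun i => f (i+1)) (m-1)
      rw [show m-1+1 = m from by omega, show (0:ℕ)+1 = 1 from rfl] at h3
      rw [← h3]
    rw [h2, hfm, hf1]
    simp
  rw [hS1, hS2, hS3] at key
  -- final algebra
  have hpascal : (m.choose t : ℝ) = ((m-1).choose (t-1) : ℝ) + ((m-1).choose t : ℝ) := by
    have h := Nat.choose_succ_succ (m-1) (t-1)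
    rw [show (m-1).succ = m from by omega, show (t-1).succ = t from by omega] at h
    exact_mod_cast h
  have hmul : (m:ℝ) * ((m-1).choose (t-1):ℝ) = (m.choose t : ℝ) * (t:ℝ) := by
    have h := Nat.add_one_mul_choose_eq (m-1) (t-1)
    rw [show m-1+1 = m from by omega, show t-1+1 = t from by omega] at h
    exact_mod_cast h
  have hC : (0:ℝ) < ((m-1).choose (t-1) : ℝ) := by
    exact_mod_cast Nat.choose_pos (show t-1 ≤ m-1 from by omega)
  have h1 : ((m-1).choose (t-1):ℝ) * g m ≤ (m.choose t : ℝ) * g t := by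
    rw [hpascal]
    linarith
  have h2 : (t:ℝ) * (((m-1).choose (t-1):ℝ) * g m) ≤ (t:ℝ) * ((m.choose t:ℝ) * g t) :=
    mul_le_mul_of_nonneg_left h1 (Nat.cast_nonneg t)
  have h3 : (t:ℝ) * ((m.choose t:ℝ) * g t) = ((m-1).choose (t-1):ℝ) * ((m:ℝ) * g t) := by
    have : (t:ℝ) * (m.choose t:ℝ) = ((m-1).choose (t-1):ℝ) * (m:ℝ) := by
      rw [mul_comm ((m-1).choose (t-1):ℝ) (m:ℝ), hmul]
      ring
    calc (t:ℝ) * ((m.choose t:ℝ) * g t) = ((t:ℝ) * (m.choose t:ℝ)) * g t := by ring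
      _ = (((m-1).choose (t-1):ℝ) * (m:ℝ)) * g t := by rw [this]
      _ = ((m-1).choose (t-1):ℝ) * ((m:ℝ) * g t) := by ring
  have h4 : (t:ℝ) * (((m-1).choose (t-1):ℝ) * g m) = ((m-1).choose (t-1):ℝ) * ((t:ℝ) * g m) := by
    ring
  rw [h3, h4] at h2
  exact le_of_mul_le_mul_left h2 hC

/-- The case `m = n-3` of the paper's Theorem: if `R = {p₁, p₂, p₃}` has three
elements and the coefficients `[2]_{p₁p₂}`, `[2]_{p₁p₃}`, `[3]_{p₁p₂p₃}`
vanish (Rulla's basis normalization), then all coefficients of an admissible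
system are nonnegative. -/
theorem stmt_2 (n : ℕ) (hn : 4 ≤ n) (p₁ p₂ p₃ : Fin n)
    (R : Finset (Fin n)) (hR : R = {p₁, p₂, p₃}) (hcard : R.card = 3)
    (a : Finset (Fin n) → ℝ) (ha : Admissible n R a)
    (h12 : a {p₁, p₂} = 0) (h13 : a {p₁, p₃} = 0) (h123 : a {p₁, p₂, p₃} = 0) :
    ∀ S : Finset (Fin n), 0 ≤ a S := by
  obtain ⟨hzero, hcompl, hinv, hFneq⟩ := ha
  -- distinctness of the marked points
  have hd12 : p₁ ≠ p₂ := by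
    rintro rfl
    rw [hR] at hcard
    have he : ({p₁, p₁, p₃} : Finset (Fin n)) = {p₁, p₃} := by ext x; simp
    rw [he] at hcard
    have h1 := Finset.card_insert_le p₁ ({p₃} : Finset (Fin n))
    rw [Finset.card_singleton] at h1
    linarith
  have hd13 : p₁ ≠ p₃ := by
    rintro rfl
    rw [hR] at hcard
    have he : ({p₁, p₂, p₁} : Finset (Fin n)) = {p₁, p₂} := by ext x; simp; tauto
    rw [he] at hcard
    have h1 := Finset.card_insert_le p₁ ({p₂} : Finset (Fin n))
    rw [Finset.card_singleton] at h1
    linarith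
  have hd23 : p₂ ≠ p₃ := by
    rintro rfl
    rw [hR] at hcard
    have he : ({p₁, p₂, p₂} : Finset (Fin n)) = {p₁, p₂} := by ext x; simp
    rw [he] at hcard
    have h1 := Finset.card_insert_le p₁ ({p₂} : Finset (Fin n))
    rw [Finset.card_singleton] at h1
    linarith
  set Rc : Finset (Fin n) := univ \ R with hRc
  set m : ℕ := Rc.card with hm
  have hnn : (univ : Finset (Fin n)).card = n := by simp
  have hmval : m = n - 3 := by
    rw [hm, hRc, card_sdiff_of_subset (subset_univ R), hnn, hcard]
  have hm1 : 1 ≤ m := by omega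
  -- the list of unmarked points and the canonical sets O j
  set L : List (Fin n) := Rc.sort (· ≤ ·) with hL
  have hLnd : L.Nodup := Finset.sort_nodup _ _
  have hLlen : L.length = m := by rw [hL, Finset.length_sort]
  have hLto : L.toFinset = Rc := Finset.sort_toFinset _ _
  set O : ℕ → Finset (Fin n) := fun j => (L.take j).toFinset with hO
  have hOsub : ∀ j, O j ⊆ Rc := by
    intro j x hx
    simp only [hO, List.mem_toFinset] at hx
    rw [← hLto]
    simp only [List.mem_toFinset]
    exact List.take_subset _ _ hx
  have hOR : ∀ j, Disjoint (O j) R := by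
    intro j
    exact (Finset.sdiff_disjoint (s := R) (t := univ)).mono (hOsub j) (le_refl R)
  have hOcard : ∀ j, j ≤ m → (O j).card = j := by
    intro j hj
    have hnd : (L.take j).Nodup := (List.take_sublist _ _).nodup hLnd
    rw [hO]
    simp only []
    rw [List.toFinset_card_of_nodup hnd, List.length_take, hLlen]
    omega
  have hOmono : ∀ i j, i ≤ j → O i ⊆ O j := by
    intro i j hij x hx
    simp only [hO, List.mem_toFinset] at hx ⊢
    have he : L.take i = (L.take j).take i := by
      rw [List.take_take]
      congr 1
      omega
    rw [he] at hx
    exact List.take_subset _ _ hx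
  have hOm : O m = Rc := by
    rw [hO]
    simp only []
    rw [← hLlen, List.take_length, hLto]
  -- the family values
  set G : Finset (Fin n) → ℕ → ℝ := fun T j => a (T ∪ O j) with hG
  have hGdef : ∀ T j, G T j = a (T ∪ O j) := fun T j => rfl
  -- invariance helper
  have hval : ∀ T : Finset (Fin n), T ⊆ R → ∀ X : Finset (Fin n), X ⊆ Rc →
      a (T ∪ X) = G T X.card := by
    intro T hT X hX
    have hXm : X.card ≤ m := by rw [hm]; exact card_le_card hX
    have hdTX : Disjoint T X := (Finset.sdiff_disjoint (s := R) (t := univ)).symm.mono hT hX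
    have hdTO : Disjoint T (O X.card) := (hOR _).symm.mono hT (le_refl _)
    rw [hGdef]
    apply hinv
    · rw [card_union_of_disjoint hdTX, card_union_of_disjoint hdTO, hOcard _ hXm]
    · have e1 : (T ∪ X) ∩ R = T := by
        rw [union_inter_distrib_right, inter_eq_left.mpr hT]
        have : X ∩ R = ∅ := by
          rw [← disjoint_iff_inter_eq_empty]
          exact (Finset.sdiff_disjoint (s := R) (t := univ)).mono hX (le_refl R)
        rw [this, union_empty]
      have e2 : (T ∪ O X.card) ∩ R = T := by
        rw [union_inter_distrib_right, inter_eq_left.mpr hT]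
        have : O X.card ∩ R = ∅ := by
          rw [← disjoint_iff_inter_eq_empty]
          exact hOR _
        rw [this, union_empty]
      rw [e1, e2]
  -- complement helper
  have hcomplval : ∀ T : Finset (Fin n), ∀ j, a (univ \ (T ∪ O j)) = a (T ∪ O j) := by
    intro T j
    rw [← Finset.compl_eq_univ_sdiff, ← hcompl]
  -- basic values
  have hO0 : O 0 = ∅ := by rw [hO]; simp
  have hg0T : ∀ T : Finset (Fin n), T.card ≤ 1 → G T 0 = 0 := by
    intro T hT1
    rw [hGdef, hO0, union_empty]
    exact hzero T hT1
  have hF1 : G ∅ 1 = 0 := by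
    rw [hGdef, empty_union]
    exact hzero _ (le_of_eq (hOcard 1 hm1))
  have hRcompl : Rcᶜ = R := by rw [hRc]; ext x; simp
  have haRc : a Rc = 0 := by
    rw [hcompl Rc, hRcompl, hR, h123]
  have hFm : G ∅ m = 0 := by
    rw [hGdef, empty_union, hOm, haRc]
  -- top values of the families: G T m = a (R \ T)
  have hGm : ∀ T : Finset (Fin n), T ⊆ R → G T m = a (R \ T) := by
    intro T hT
    rw [hGdef, hOm, hcompl]
    congr 1
    ext x
    simp only [Finset.mem_compl, mem_union, mem_sdiff, hRc]
    simp only [Finset.mem_sdiff, Finset.mem_univ, true_and]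
    constructor
    · intro h
      push_neg at h
      exact ⟨h.2, h.1⟩
    · intro h
      push_neg
      exact ⟨h.2, h.1⟩
  -- the basic F-inequality instance for a trace family
  have hinst : ∀ T : Finset (Fin n), T ⊆ R → T.card ≤ 1 →
      ∀ u d : ℕ, (T.Nonempty ∨ 1 ≤ u) → 1 ≤ d → u + d + 1 ≤ m →
      G T u + G ∅ d + G T (u+d+1) ≤ G T (u+1) + G ∅ (d+1) + G T (u+d) := by
    intro T hT hT1 u d hne hd hud
    set I : Finset (Fin n) := O (u+d+1) \ O (u+d) with hI
    set J : Finset (Fin n) := T ∪ O u with hJ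
    set K : Finset (Fin n) := O (u+d) \ O u with hK
    set Lp : Finset (Fin n) := univ \ (T ∪ O (u+d+1)) with hLp
    have hsub1 : O u ⊆ O (u+d) := hOmono _ _ (by omega)
    have hsub2 : O (u+d) ⊆ O (u+d+1) := hOmono _ _ (by omega)
    have cI : I.card = 1 := by
      rw [hI, card_sdiff_of_subset hsub2, hOcard _ (by omega), hOcard _ (by omega)]
      omega
    have cK : K.card = d := by
      rw [hK, card_sdiff_of_subset hsub1, hOcard _ (by omega), hOcard _ (by omega)]
      omega
    have hdisjTO : ∀ j, Disjoint T (O j) := fun j => (hOR j).symm.mono hT (le_refl _)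
    -- nonemptiness
    have nI : I.Nonempty := card_pos.mp (by omega)
    have nK : K.Nonempty := card_pos.mp (by omega)
    have nJ : J.Nonempty := by
      rcases hne with h | h
      · exact h.mono subset_union_left
      · have : (O u).Nonempty := card_pos.mp (by rw [hOcard _ (by omega)]; omega)
        exact this.mono subset_union_right
    have nL : Lp.Nonempty := by
      have hcRT : 0 < (R \ T).card := by
        rw [card_sdiff_of_subset hT, hcard]
        omega
      obtain ⟨x, hx⟩ := card_pos.mp hcRT
      rw [mem_sdiff] at hx
      refine ⟨x, ?_⟩
      rw [hLp, mem_sdiff, mem_union]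
      refine ⟨mem_univ x, ?_⟩
      push_neg
      refine ⟨hx.2, fun hc => ?_⟩
      exact (Finset.disjoint_left.mp (hOR (u+d+1)) hc) hx.1
    -- disjointness
    have dIJ : Disjoint I J := by
      rw [hJ, Finset.disjoint_union_right]
      constructor
      · exact (hOR (u+d+1)).mono (sdiff_subset.trans (le_refl _)) hT
      · exact Finset.sdiff_disjoint.mono_right hsub1
    have dIK : Disjoint I K := Finset.sdiff_disjoint.mono_right sdiff_subset
    have dIL : Disjoint I Lp := by
      have h1 : Disjoint Lp (T ∪ O (u+d+1)) := Finset.sdiff_disjoint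
      exact (h1.symm.mono_left (le_refl _)).mono_left
        (sdiff_subset.trans subset_union_right)
    have dJK : Disjoint J K := by
      rw [hJ, Finset.disjoint_union_left]
      constructor
      · exact (hOR (u+d)).symm.mono hT sdiff_subset
      · exact Finset.sdiff_disjoint.symm
    have dJL : Disjoint J Lp := by
      have h1 : Disjoint Lp (T ∪ O (u+d+1)) := Finset.sdiff_disjoint
      exact (h1.symm).mono_left (union_subset_union (le_refl T) (hsub1.trans hsub2))
    have dKL : Disjoint K Lp := by
      have h1 : Disjoint Lp (T ∪ O (u+d+1)) := Finset.sdiff_disjoint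
      exact (h1.symm).mono_left ((sdiff_subset.trans hsub2).trans subset_union_right)
    -- the union is everything
    have hIJK : I ∪ J ∪ K = T ∪ O (u+d+1) := by
      have h1 : I ∪ J ∪ K = J ∪ (I ∪ K) := by
        rw [union_comm I J, union_assoc]
      have h2 : I ∪ K = O (u+d+1) \ O u :=
        Finset.sdiff_union_sdiff_cancel hsub2 hsub1
      rw [h1, h2, hJ, union_assoc, Finset.union_sdiff_of_subset (hsub1.trans hsub2)]
    have hunion : I ∪ J ∪ K ∪ Lp = univ := by
      rw [hIJK, hLp, Finset.union_sdiff_of_subset (subset_univ _)]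
    -- the F-inequality
    have main := hFneq I J K Lp nI nJ nK nL dIJ dIK dIL dJK dJL dKL hunion
    -- evaluate the seven terms
    have vI : a I = 0 := hzero I (by omega)
    have vJ : a J = G T u := by
      rw [hJ, hval T hT (O u) (hOsub u), hOcard _ (by omega)]
    have vK : a K = G ∅ d := by
      have := hval ∅ (empty_subset R) K (by rw [hK]; exact sdiff_subset.trans (hOsub _))
      rw [empty_union] at this
      rw [this, cK]
    have vL : a Lp = G T (u+d+1) := by
      rw [hLp, hcomplval, hGdef]
    have vIJ : a (I ∪ J) = G T (u+1) := by
      have he : I ∪ J = T ∪ (O u ∪ I) := by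
        rw [hJ, union_comm I, union_assoc]
      have hXsub : O u ∪ I ⊆ Rc := union_subset (hOsub u) (by rw [hI]; exact sdiff_subset.trans (hOsub _))
      have hXcard : (O u ∪ I).card = u + 1 := by
        rw [card_union_of_disjoint, hOcard _ (by omega), cI]
        exact (Finset.sdiff_disjoint.mono_right hsub1).symm
      rw [he, hval T hT _ hXsub, hXcard]
    have vIK : a (I ∪ K) = G ∅ (d+1) := by
      have h2 : I ∪ K = O (u+d+1) \ O u :=
        Finset.sdiff_union_sdiff_cancel hsub2 hsub1
      have hXsub : O (u+d+1) \ O u ⊆ Rc := sdiff_subset.trans (hOsub _)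
      have hXcard : (O (u+d+1) \ O u).card = d + 1 := by
        rw [card_sdiff_of_subset (hsub1.trans hsub2), hOcard _ (by omega), hOcard _ (by omega)]
        omega
      have := hval ∅ (empty_subset R) _ hXsub
      rw [empty_union] at this
      rw [h2, this, hXcard]
    have vIL : a (I ∪ Lp) = G T (u+d) := by
      have h1 : (T ∪ O (u+d+1)) \ (T ∪ O (u+d)) = I := by
        ext x
        simp only [hI, mem_sdiff, mem_union, not_or]
        constructor
        · rintro ⟨h2 | h2, h3, h4⟩
          · exact absurd h2 h3
          · exact ⟨h2, h4⟩
        · rintro ⟨h2, h4⟩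
          have h3 : x ∉ T := fun hx =>
            (Finset.disjoint_left.mp (hdisjTO (u+d+1)) hx) h2
          exact ⟨Or.inr h2, h3, h4⟩
      have h5 : I ∪ Lp = univ \ (T ∪ O (u+d)) := by
        calc I ∪ Lp = univ \ (T ∪ O (u+d+1)) ∪ ((T ∪ O (u+d+1)) \ (T ∪ O (u+d))) := by
              rw [h1, hLp, union_comm]
          _ = univ \ (T ∪ O (u+d)) :=
              Finset.sdiff_union_sdiff_cancel (subset_univ _)
                (union_subset_union (le_refl T) hsub2)
      rw [h5, hcomplval, hGdef]
    rw [vI, vJ, vK, vL, vIJ, vIK, vIL] at main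
    linarith
  -- the rectangle-inequality hypothesis for lemA, for each trace family
  have hIfam : ∀ T : Finset (Fin n), T ⊆ R → T.card ≤ 1 →
      ∀ u d : ℕ, 1 ≤ d → u + d + 1 ≤ m →
      G T u + G ∅ d + G T (u+d+1) ≤ G T (u+1) + G ∅ (d+1) + G T (u+d) := by
    intro T hT hT1 u d hd hud
    rcases Nat.eq_zero_or_pos u with rfl | hu
    · rcases T.eq_empty_or_nonempty with rfl | hne
      · have h0 : G ∅ 0 = 0 := hg0T ∅ (by simp)
        simp only [Nat.zero_add]
        rw [h0, hF1]
        linarith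
      · exact hinst T hT hT1 0 d (Or.inl hne) hd hud
    · exact hinst T hT hT1 u d (Or.inr hu) hd hud
  have hm0 : (0:ℝ) < (m:ℝ) := by exact_mod_cast hm1
  -- the trace-∅ family is nonnegative
  have hFnn : ∀ t ≤ m, 0 ≤ G ∅ t := by
    intro t htm
    have h := lemA m (G ∅) (G ∅) hF1 hFm (hg0T ∅ (by simp))
      (hIfam ∅ (empty_subset R) (by simp)) t htm
    rw [hFm, mul_zero] at h
    nlinarith
  -- subset facts
  have hp1R : ({p₁} : Finset (Fin n)) ⊆ R := by
    rw [hR]; intro x hx; rw [mem_singleton] at hx; subst hx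
    exact mem_insert_self _ _
  have hp2R : ({p₂} : Finset (Fin n)) ⊆ R := by
    rw [hR]; intro x hx; rw [mem_singleton] at hx; subst hx
    exact mem_insert_of_mem (mem_insert_self _ _)
  have hp3R : ({p₃} : Finset (Fin n)) ⊆ R := by
    rw [hR]; intro x hx; rw [mem_singleton] at hx; subst hx
    exact mem_insert_of_mem (mem_insert_of_mem (mem_singleton_self _))
  -- top values
  have hG2m : G {p₂} m = 0 := by
    rw [hGm _ hp2R]
    have he : R \ {p₂} = {p₁, p₃} := by
      rw [hR]; ext x
      simp only [mem_sdiff, mem_insert, mem_singleton]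
      constructor
      · rintro ⟨h1 | h1 | h1, h2⟩ <;> tauto
      · rintro (rfl | rfl)
        · exact ⟨by tauto, hd12⟩
        · exact ⟨by tauto, (Ne.symm hd23)⟩
    rw [he, h13]
  have hG3m : G {p₃} m = 0 := by
    rw [hGm _ hp3R]
    have he : R \ {p₃} = {p₁, p₂} := by
      rw [hR]; ext x
      simp only [mem_sdiff, mem_insert, mem_singleton]
      constructor
      · rintro ⟨h1 | h1 | h1, h2⟩ <;> tauto
      · rintro (rfl | rfl)
        · exact ⟨by tauto, hd13⟩
        · exact ⟨by tauto, hd23⟩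
    rw [he, h12]
  -- the special inequality giving `0 ≤ G {p₁} m`
  have hG1m : 0 ≤ G {p₁} m := by
    have hRuniv : R ∪ Rc = univ := Finset.union_sdiff_of_subset (subset_univ R)
    have dRRc : Disjoint R Rc := Finset.sdiff_disjoint.symm
    have nRc : Rc.Nonempty := card_pos.mp (by omega)
    have d12 : Disjoint ({p₁} : Finset (Fin n)) {p₂} :=
      Finset.disjoint_singleton.mpr hd12
    have d13 : Disjoint ({p₁} : Finset (Fin n)) {p₃} :=
      Finset.disjoint_singleton.mpr hd13
    have d23 : Disjoint ({p₂} : Finset (Fin n)) {p₃} :=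
      Finset.disjoint_singleton.mpr hd23
    have d1c : Disjoint ({p₁} : Finset (Fin n)) Rc := dRRc.mono_left hp1R
    have d2c : Disjoint ({p₂} : Finset (Fin n)) Rc := dRRc.mono_left hp2R
    have d3c : Disjoint ({p₃} : Finset (Fin n)) Rc := dRRc.mono_left hp3R
    have hun : ({p₁} : Finset (Fin n)) ∪ {p₂} ∪ {p₃} ∪ Rc = univ := by
      have h1 : ({p₁} : Finset (Fin n)) ∪ {p₂} ∪ {p₃} = R := by
        rw [hR]; ext x; simp [or_assoc]
      rw [h1, hRuniv]
    have main := hFneq {p₁} {p₂} {p₃} Rc (singleton_nonempty _) (singleton_nonempty _)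
      (singleton_nonempty _) nRc d12 d13 d1c d23 d2c d3c hun
    have v1 : a ({p₁} : Finset (Fin n)) = 0 := hzero _ (by simp)
    have v2 : a ({p₂} : Finset (Fin n)) = 0 := hzero _ (by simp)
    have v3 : a ({p₃} : Finset (Fin n)) = 0 := hzero _ (by simp)
    have v12 : a (({p₁} : Finset (Fin n)) ∪ {p₂}) = 0 := by
      rw [show ({p₁} : Finset (Fin n)) ∪ {p₂} = {p₁, p₂} from by ext x; simp]
      exact h12
    have v13 : a (({p₁} : Finset (Fin n)) ∪ {p₃}) = 0 := by
      rw [show ({p₁} : Finset (Fin n)) ∪ {p₃} = {p₁, p₃} from by ext x; simp]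
      exact h13
    have v1c : a (({p₁} : Finset (Fin n)) ∪ Rc) = G {p₁} m := by
      rw [hval {p₁} hp1R Rc (le_refl Rc), ← hm]
    rw [v1, v2, v3, v12, v13, v1c, haRc] at main
    linarith
  -- the singleton-trace families are nonnegative
  have hG1nn : ∀ t ≤ m, 0 ≤ G {p₁} t := by
    intro t htm
    have h := lemA m (G ∅) (G {p₁}) hF1 hFm (hg0T _ (by simp))
      (hIfam {p₁} hp1R (by simp)) t htm
    nlinarith [mul_nonneg (Nat.cast_nonneg (α := ℝ) t) hG1m]
  have hG2nn : ∀ t ≤ m, 0 ≤ G {p₂} t := by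
    intro t htm
    have h := lemA m (G ∅) (G {p₂}) hF1 hFm (hg0T _ (by simp))
      (hIfam {p₂} hp2R (by simp)) t htm
    rw [hG2m, mul_zero] at h
    nlinarith
  have hG3nn : ∀ t ≤ m, 0 ≤ G {p₃} t := by
    intro t htm
    have h := lemA m (G ∅) (G {p₃}) hF1 hFm (hg0T _ (by simp))
      (hIfam {p₃} hp3R (by simp)) t htm
    rw [hG3m, mul_zero] at h
    nlinarith
  -- any subset whose trace has at most one element is nonnegative
  have hsmall : ∀ S : Finset (Fin n), (S ∩ R).card ≤ 1 → 0 ≤ a S := by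
    intro S hS1
    have hsplitS : (S ∩ R) ∪ (S \ R) = S := by
      ext x; simp only [mem_union, mem_inter, mem_sdiff]; tauto
    have hXsub : S \ R ⊆ Rc := by
      intro x hx
      rw [mem_sdiff] at hx
      rw [hRc, mem_sdiff]
      exact ⟨mem_univ x, hx.2⟩
    have hcardX : (S \ R).card ≤ m := by rw [hm]; exact card_le_card hXsub
    have hv : a S = G (S ∩ R) (S \ R).card := by
      conv_lhs => rw [← hsplitS]
      exact hval _ inter_subset_right _ hXsub
    rw [hv]
    rcases Nat.lt_or_ge (S ∩ R).card 1 with h0 | h1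
    · have he : S ∩ R = ∅ := card_eq_zero.mp (by omega)
      rw [he]
      exact hFnn _ hcardX
    · have hc1 : (S ∩ R).card = 1 := by omega
      obtain ⟨x, hx⟩ := card_eq_one.mp hc1
      have hxR : x ∈ R := by
        have hmem : x ∈ S ∩ R := by rw [hx]; exact mem_singleton_self x
        exact (mem_inter.mp hmem).2
      rw [hx]
      rw [hR, mem_insert, mem_insert, mem_singleton] at hxR
      rcases hxR with rfl | rfl | rfl
      · exact hG1nn _ hcardX
      · exact hG2nn _ hcardX
      · exact hG3nn _ hcardX
  -- conclusion
  intro S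
  rcases le_or_gt (S ∩ R).card 1 with h | h
  · exact hsmall S h
  · rw [hcompl S]
    apply hsmall
    have hdisj : Disjoint (S ∩ R) (Sᶜ ∩ R) := by
      apply Finset.disjoint_left.mpr
      intro x hx hx2
      rw [mem_inter] at hx hx2
      exact (Finset.mem_compl.mp hx2.1) hx.1
    have hcup : (S ∩ R) ∪ (Sᶜ ∩ R) = R := by
      ext x
      simp only [mem_union, mem_inter, Finset.mem_compl]
      tauto
    have hsum : (S ∩ R).card + (Sᶜ ∩ R).card = 3 := by
      rw [← card_union_of_disjoint hdisj, hcup, hcard]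
    have hle : (S ∩ R).card ≤ 3 := by
      calc (S ∩ R).card ≤ R.card := card_le_card inter_subset_right
        _ = 3 := hcard
    omega
end

section
/- Let n ≥ 4 and k be integers with 1 ≤ k ≤ n−3, and let a : ℕ → ℝ satisfy a(1) = 0 and a(j) = a(n−j) for all 1 ≤ j ≤ n−1. Then Σ_{i=1}^{n−k−2} ( a(k+1) + a(k+i) + a(i+1) − a(k) − a(i) − a(n−k−i−1) ) = (n−k)·a(k+1) − (n−k−2)·a(k). -/
open Finset

lemma tel_aux (f : ℕ → ℝ) (N : ℕ) :
    ∑ i ∈ Finset.Icc 1 N, (f i - f (i + 1)) = f 1 - f (N + 1) := by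
  induction N with
  | zero => simp
  | succ N ih =>
      rw [Finset.sum_Icc_succ_top (by omega), ih]
      ring

/-- The telescoping identity for the case `m = n` of the paper's Theorem:
summing the F-curve intersection numbers of the partitions `(1, k, i, *)`
over `i = 1, …, n-k-2` gives `(n-k)·a(k+1) - (n-k-2)·a(k)`. -/
theorem stmt_3 (n k : ℕ) (hn : 4 ≤ n) (hk1 : 1 ≤ k) (hk2 : k ≤ n - 3)
    (a : ℕ → ℝ) (h1 : a 1 = 0)
    (hsym : ∀ j : ℕ, 1 ≤ j → j ≤ n - 1 → a j = a (n - j)) :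
    ∑ i ∈ Finset.Icc 1 (n - k - 2),
        (a (k + 1) + a (k + i) + a (i + 1) - a k - a i - a (n - k - i - 1))
      = ((n : ℝ) - k) * a (k + 1) - ((n : ℝ) - k - 2) * a k := by
  have hkn : k + 3 ≤ n := by omega
  have hrw : ∀ i ∈ Finset.Icc 1 (n - k - 2),
      a (k + 1) + a (k + i) + a (i + 1) - a k - a i - a (n - k - i - 1)
      = (a (k + 1) - a k) + ((fun j => a (k + j)) i - (fun j => a (k + j)) (i + 1))
        - ((fun j => a j) i - (fun j => a j) (i + 1)) := by
    intro i hi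
    simp only [Finset.mem_Icc] at hi
    have hs := hsym (k + i + 1) (by omega) (by omega)
    have h2 : n - (k + i + 1) = n - k - i - 1 := by omega
    rw [h2] at hs
    simp only
    rw [← hs, ← Nat.add_assoc]
    ring
  rw [Finset.sum_congr rfl hrw, Finset.sum_sub_distrib, Finset.sum_add_distrib,
    Finset.sum_const, tel_aux, tel_aux]
  have hcard : (Finset.Icc 1 (n - k - 2)).card = n - k - 2 := by
    rw [Nat.card_Icc]; omega
  have e1 : k + 1 ≤ n - 1 := by omega
  have hs1 := hsym (k + 1) (by omega) e1
  have h1' : n - (k + 1) = n - k - 2 + 1 := by omega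
  rw [h1'] at hs1
  have hs2 := hsym 1 (by omega) (by omega)
  have h2' : k + (n - k - 2 + 1) = n - 1 := by omega
  rw [h2', Nat.add_one, Nat.sub_one] at *
  have hcast : ((n - k - 2 : ℕ) : ℝ) = (n : ℝ) - k - 2 := by
    rw [Nat.cast_sub (by omega), Nat.cast_sub (by omega)]
    push_cast
    ring
  rw [hcard, nsmul_eq_mul, hcast, Nat.add_one] at *
  rw [← hs2, h1, ← hs1]
  ring
end

section
/- Let n ≥ 4 be an integer and let a, d : ℕ → ℝ satisfy a(1) = 0, a(j) = d(n−j) for all 1 ≤ j ≤ n−1, and d(2) = 0. Suppose that for all integers k, i with 2 ≤ k ≤ n−3 and 1 ≤ i ≤ n−k−2 one has d(k+1) + d(k+i) + a(i+1) ≥ d(k) + a(i) + d(k+i+1). Then d(h) ≥ 0 for every 2 ≤ h ≤ n−2, and consequently a(h) = d(n−h) ≥ 0 for every 2 ≤ h ≤ n−2. -/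
/-- Positivity of the coefficients `[h]_{{1,2}}` in the case `m = n-2`:
from the normalization `d(2) = 0` and the F-curve inequalities of the
partitions `(1, k_{{1,2}}, i, *)`, all `d(h)` with `2 ≤ h ≤ n-2` are
nonnegative, hence so are all `a(h) = d(n-h)`. -/
theorem stmt_6 (n : ℕ) (hn : 4 ≤ n) (a d : ℕ → ℝ) (h1 : a 1 = 0)
    (hsym : ∀ j : ℕ, 1 ≤ j → j ≤ n - 1 → a j = d (n - j)) (hd2 : d 2 = 0)
    (hyp : ∀ k i : ℕ, 2 ≤ k → k ≤ n - 3 → 1 ≤ i → i ≤ n - k - 2 →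
      d k + a i + d (k + i + 1) ≤ d (k + 1) + d (k + i) + a (i + 1)) :
    (∀ h : ℕ, 2 ≤ h → h ≤ n - 2 → 0 ≤ d h) ∧
    (∀ h : ℕ, 2 ≤ h → h ≤ n - 2 → 0 ≤ a h) := by
  have key : ∀ k : ℕ, 2 ≤ k → k ≤ n - 2 → 0 ≤ d k := by
    intro k
    induction k with
    | zero => intro h; omega
    | succ k ih =>
      intro hk2 hkn
      rcases Nat.lt_or_ge k 2 with h | h
      · have hk1 : k + 1 = 2 := by omega
        rw [hk1, hd2]
      · have hdk : 0 ≤ d k := ih h (by omega)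
        obtain ⟨M, hM1, hMn⟩ : ∃ M, 1 ≤ M ∧ n = k + M + 2 :=
          ⟨n - k - 2, by omega, by omega⟩
        have hsum : 0 ≤ ∑ j ∈ Finset.range M,
            ((d (k+1) - d k) + ((a (j+1+1) - a (j+1)) - (d (k+(j+1)+1) - d (k+j+1)))) := by
          apply Finset.sum_nonneg
          intro j hj
          have hjM : j < M := Finset.mem_range.mp hj
          have hh := hyp k (j+1) h (by omega) (by omega) (by omega)
          have hadd : k + (j+1) = k + j + 1 := by ring
          simp only [hadd] at hh ⊢
          linarith
        have e1 : ∑ j ∈ Finset.range M, (a (j+1+1) - a (j+1)) = a (M+1) - a (0+1) :=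
          Finset.sum_range_sub (fun j => a (j+1)) M
        have e2 : ∑ j ∈ Finset.range M, (d (k+(j+1)+1) - d (k+j+1)) = d (k+M+1) - d (k+0+1) :=
          Finset.sum_range_sub (fun j => d (k+j+1)) M
        have e3 : ∑ j ∈ Finset.range M,
            ((a (j+1+1) - a (j+1)) - (d (k+(j+1)+1) - d (k+j+1)))
            = (a (M+1) - a (0+1)) - (d (k+M+1) - d (k+0+1)) := by
          rw [Finset.sum_sub_distrib, e1, e2]
        rw [Finset.sum_add_distrib, e3, Finset.sum_const, nsmul_eq_mul] at hsum
        simp only [Nat.add_zero, Nat.zero_add] at hsum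
        have ha : a (M+1) = d (k+1) := by
          rw [hsym (M+1) (by omega) (by omega)]
          congr 1
          omega
        have hdn : d (k+M+1) = 0 := by
          have h2 := hsym 1 (le_refl 1) (by omega)
          rw [h1] at h2
          rw [show k+M+1 = n-1 by omega]
          exact h2.symm
        rw [ha, hdn, h1] at hsum
        have hM1' : (1:ℝ) ≤ (M:ℝ) := by exact_mod_cast hM1
        nlinarith [mul_nonneg (by linarith : (0:ℝ) ≤ (M:ℝ)) hdk]
  refine ⟨key, fun h hh2 hhn => ?_⟩
  rw [hsym h (by omega) (by omega)]
  exact key (n-h) (by omega) (by omega)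
end

section
/- Let n ≥ 4 and k be integers with 1 ≤ k ≤ n−3, and let a, d, e : ℕ → ℝ satisfy a(1) = 0, a(j) = d(n−j) for all 1 ≤ j ≤ n−1, and e(n−1) = 0. If e(k+1) + e(k+i) + a(i+1) ≥ e(k) + a(i) + e(k+i+1) for every integer i with 1 ≤ i ≤ n−k−2, then (n−k−1)·e(k+1) + d(k+1) ≥ (n−k−2)·e(k). -/
/-- The mixed summation inequality in the case `m = n-2`: summing the
F-curve inequalities of the partitions `(1, k_{{α}}, i, *)` over
`i = 1, …, n-k-2` yields `(n-k-1)·e(k+1) + d(k+1) ≥ (n-k-2)·e(k)`. -/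
theorem stmt_7 (n k : ℕ) (hn : 4 ≤ n) (hk1 : 1 ≤ k) (hk2 : k ≤ n - 3)
    (a d e : ℕ → ℝ) (h1 : a 1 = 0)
    (hsym : ∀ j : ℕ, 1 ≤ j → j ≤ n - 1 → a j = d (n - j))
    (he : e (n - 1) = 0)
    (hyp : ∀ i : ℕ, 1 ≤ i → i ≤ n - k - 2 →
      e k + a i + e (k + i + 1) ≤ e (k + 1) + e (k + i) + a (i + 1)) :
    ((n : ℝ) - k - 2) * e k ≤ ((n : ℝ) - k - 1) * e (k + 1) + d (k + 1) := by
  have key : ∀ m : ℕ, m ≤ n - k - 2 →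
      (m : ℝ) * e k + a 1 + e (k + m + 1) ≤ (m : ℝ) * e (k + 1) + e (k + 1) + a (m + 1) := by
    intro m
    induction m with
    | zero => intro _; simp; linarith
    | succ p ih =>
      intro hm
      have hA := ih (by omega)
      have hB := hyp (p + 1) (by omega) (by omega)
      have e1 : k + (p + 1) + 1 = k + p + 1 + 1 := by omega
      have e2 : k + (p + 1) = k + p + 1 := by omega
      rw [e1, e2] at hB
      rw [e1]
      push_cast
      linarith
  have hN := key (n - k - 2) le_rfl
  have hkn : k + (n - k - 2) + 1 = n - 1 := by omega
  have ha : a (n - k - 2 + 1) = d (k + 1) := by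
    rw [hsym _ (by omega) (by omega)]
    congr 1
    omega
  rw [hkn, ha, h1, he] at hN
  have hc : ((n - k - 2 : ℕ) : ℝ) = (n : ℝ) - k - 2 := by
    have : (n - k - 2 : ℕ) = n - (k + 2) := by omega
    rw [this, Nat.cast_sub (by omega)]
    push_cast; ring
  rw [hc] at hN
  nlinarith [hN]
end

section
/- Let n ≥ 4 be an integer and let a, g : ℕ → ℝ satisfy a(1) = 0, a(j) = g(n−j) for all 1 ≤ j ≤ n−1, and g(3) = 0. Suppose that for all integers k, i with 3 ≤ k ≤ n−3 and 1 ≤ i ≤ n−k−2 one has g(k+1) + g(k+i) + a(i+1) ≥ g(k) + a(i) + g(k+i+1). Then g(h) ≥ 0 for every integer h with 3 ≤ h ≤ n−2. -/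
/-- Positivity of the coefficients `[h]_{{1,2,3}}` in the case `m = n-3`:
from the normalization `g(3) = 0` and the F-curve inequalities of the
partitions `(1, k_{{1,2,3}}, i, *)`, all `g(h)` with `3 ≤ h ≤ n-2` are
nonnegative. -/
theorem stmt_12 (n : ℕ) (hn : 4 ≤ n) (a g : ℕ → ℝ) (h1 : a 1 = 0)
    (hsym : ∀ j : ℕ, 1 ≤ j → j ≤ n - 1 → a j = g (n - j)) (hg3 : g 3 = 0)
    (hyp : ∀ k i : ℕ, 3 ≤ k → k ≤ n - 3 → 1 ≤ i → i ≤ n - k - 2 →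
      g k + a i + g (k + i + 1) ≤ g (k + 1) + g (k + i) + a (i + 1)) :
    ∀ h : ℕ, 3 ≤ h → h ≤ n - 2 → 0 ≤ g h := by
  -- telescoping sum of the F-curve inequalities
  have claim : ∀ k : ℕ, 3 ≤ k → k ≤ n - 3 → ∀ m : ℕ, m ≤ n - k - 2 →
      (m : ℝ) * (g k - g (k + 1)) ≤ g (k + 1) - g (k + m + 1) + a (m + 1) - a 1 := by
    intro k hk3 hkn m
    induction m with
    | zero => intro _; simp
    | succ m ih =>
      intro hm
      have ih' := ih (by omega)
      have h2 := hyp k (m + 1) hk3 hkn (by omega) (by omega)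
      have e1 : k + (m + 1) + 1 = k + m + 1 + 1 := by omega
      have e2 : k + (m + 1) = k + m + 1 := by omega
      rw [e1, e2] at h2
      rw [show k + (m + 1) + 1 = k + m + 1 + 1 from by omega]
      push_cast
      linarith
  intro h h3
  induction h, h3 using Nat.le_induction with
  | base => intro _; rw [hg3]
  | succ h hh ih =>
    intro hle
    have hh3 : h ≤ n - 3 := by omega
    have hg : 0 ≤ g h := ih (by omega)
    have hC := claim h hh hh3 (n - h - 2) le_rfl
    have e1 : h + (n - h - 2) + 1 = n - 1 := by omega
    have e2 : n - h - 2 + 1 = n - h - 1 := by omega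
    rw [e1, e2] at hC
    have ha1 : a (n - h - 1) = g (h + 1) := by
      have := hsym (n - h - 1) (by omega) (by omega)
      rw [this]
      congr 1
      omega
    have hgn1 : g (n - 1) = 0 := by
      have := hsym 1 le_rfl (by omega)
      rw [← this, h1]
    rw [ha1, hgn1, h1] at hC
    have hc1 : (1 : ℝ) ≤ ((n - h - 2 : ℕ) : ℝ) := by
      have : 1 ≤ n - h - 2 := by omega
      exact_mod_cast this
    nlinarith [mul_nonneg (le_trans zero_le_one hc1) hg]
end
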